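/- The expected objective satisfies J(a(π)) ≥ J(π) and J(a(π)) ≥ r⊥, where J(ρ,π') = E_{x∼ρ}[V((x, empty); π')]. Moreover J(a(π)) > J(π) if and only if some reachable non-terminal state s satisfies V(s;π) < r⊥. -/

import Mathlib

open Finset

attribute [local instance] Classical.propDecidable

variable {V : Type*}

/-- Expected terminal reward (value function) of policy `π` from state `s`
with `n` generation steps remaining; `e` is the end-of-sequence token and
`r` the terminal reward, collected only when `e` is emitted.  States already
containing `e` are terminal and have value `0`. -/
noncomputable def Vval [Fintype V] (e : V) (r : List V → ℝ)
    (π : List V → V → ℝ) : ℕ → List V → ℝ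
  | 0, _ => 0
  | n+1, s =>
      if e ∈ s then 0 else
      ∑ a : V, π s a * (if a = e then r (s ++ [a]) else Vval e r π n (s ++ [a]))

/-- Value of the dynamic value-thresholding policy `a(π)`: at any
non-terminal state whose value under `π` is below the abstention reward
`rb` it abstains and receives `rb`; otherwise it follows `π`. -/
noncomputable def Aval [Fintype V] (e : V) (r : List V → ℝ)
    (π : List V → V → ℝ) (rb : ℝ) : ℕ → List V → ℝ
  | 0, _ => 0
  | n+1, s =>
      if e ∈ s then 0 else
      if Vval e r π (n+1) s < rb then rb else
      ∑ a : V, π s a * (if a = e then r (s ++ [a]) else Aval e r π rb n (s ++ [a]))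

/-- One generation step with positive probability from a non-terminal state. -/
def Step (e : V) (π : List V → V → ℝ) (s s' : List V) : Prop :=
  e ∉ s ∧ ∃ a : V, 0 < π s a ∧ s' = s ++ [a]

/-- `s'` is reachable from `s` with positive probability under `π`. -/
def Reach (e : V) (π : List V → V → ℝ) : List V → List V → Prop :=
  Relation.ReflTransGen (Step e π)

lemma reach_length_le {e : V} {π : List V → V → ℝ} {u v : List V}
    (h : Reach e π u v) : u.length ≤ v.length := by
  induction h with
  | refl => exact le_refl _
  | tail _ st ih =>
      obtain ⟨_, a, _, rfl⟩ := st
      simp only [List.length_append, List.length_singleton]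
      omega

lemma Vval_le_Aval [Fintype V] (e : V) (r : List V → ℝ)
    (π : List V → V → ℝ) (rb : ℝ) (hπ0 : ∀ s a, 0 ≤ π s a) :
    ∀ n s, Vval e r π n s ≤ Aval e r π rb n s := by
  intro n
  induction n with
  | zero => intro s; simp [Vval, Aval]
  | succ n ih =>
      intro s
      by_cases hs : e ∈ s
      · simp [Vval, Aval, hs]
      · by_cases hlt : Vval e r π (n+1) s < rb
        · rw [show Aval e r π rb (n+1) s = rb by rw [Aval]; simp [hs, hlt]]
          exact le_of_lt hlt
        · rw [Vval, Aval]
          simp only [hs, if_false, hlt, if_neg]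
          apply Finset.sum_le_sum
          intro a _
          apply mul_le_mul_of_nonneg_left _ (hπ0 s a)
          by_cases ha : a = e
          · simp [ha]
          · simp only [ha, if_false]
            exact ih _

lemma rb_le_Aval [Fintype V] (e : V) (r : List V → ℝ)
    (π : List V → V → ℝ) (rb : ℝ) (hπ0 : ∀ s a, 0 ≤ π s a)
    {n : ℕ} {s : List V} (hs : e ∉ s) : rb ≤ Aval e r π rb (n+1) s := by
  by_cases hlt : Vval e r π (n+1) s < rb
  · rw [show Aval e r π rb (n+1) s = rb by rw [Aval]; simp [hs, hlt]]
  · calc rb ≤ Vval e r π (n+1) s := not_lt.mp hlt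
      _ ≤ Aval e r π rb (n+1) s := Vval_le_Aval e r π rb hπ0 _ _

lemma Aval_eq_Vval_of_no_bad [Fintype V] (e : V) (r : List V → ℝ)
    (π : List V → V → ℝ) (rb : ℝ) (hπ0 : ∀ s a, 0 ≤ π s a) :
    ∀ n s, e ∉ s →
      (∀ s', Reach e π s s' → e ∉ s' → s'.length - s.length < n →
        rb ≤ Vval e r π (n - (s'.length - s.length)) s') →
      Aval e r π rb n s = Vval e r π n s := by
  intro n
  induction n with
  | zero => intro s _ _; simp [Vval, Aval]
  | succ n ih =>
      intro s hs hgood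
      have h0 : rb ≤ Vval e r π (n+1) s := by
        have := hgood s Relation.ReflTransGen.refl hs (by omega)
        simpa using this
      rw [Vval, Aval]
      simp only [hs, if_false, not_lt.mpr h0, if_neg, not_false_iff]
      apply Finset.sum_congr rfl
      intro a _
      rcases eq_or_lt_of_le (hπ0 s a) with hπ | hπ
      · rw [← hπ]; ring
      · congr 1
        by_cases ha : a = e
        · simp [ha]
        · simp only [ha, if_false]
          have hsa : e ∉ s ++ [a] := by
            simp [hs, ha, Ne.symm]
          apply ih _ hsa
          intro s' hreach hes' hlen
          have hstep : Step e π s (s ++ [a]) := ⟨hs, a, hπ, rfl⟩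
          have hreach' : Reach e π s s' := Relation.ReflTransGen.head hstep hreach
          have hmono := reach_length_le hreach
          simp only [List.length_append, List.length_singleton] at hmono hlen ⊢
          have hlen' : s'.length - s.length < n + 1 := by omega
          have := hgood s' hreach' hes' hlen'
          have harith : (n + 1) - (s'.length - s.length)
              = n - (s'.length - (s.length + 1)) := by omega
          rwa [harith] at this

lemma Vval_lt_Aval_of_bad [Fintype V] (e : V) (r : List V → ℝ)
    (π : List V → V → ℝ) (rb : ℝ) (hπ0 : ∀ s a, 0 ≤ π s a) :
    ∀ n s, e ∉ s →
      (∃ s', Reach e π s s' ∧ e ∉ s' ∧ s'.length - s.length < n ∧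
        Vval e r π (n - (s'.length - s.length)) s' < rb) →
      Vval e r π n s < Aval e r π rb n s := by
  intro n
  induction n with
  | zero => rintro s _ ⟨s', _, _, h, _⟩; omega
  | succ n ih =>
      intro s hs ⟨s', hreach, hes', hlen, hval⟩
      by_cases hlt : Vval e r π (n+1) s < rb
      · rw [show Aval e r π rb (n+1) s = rb by rw [Aval]; simp [hs, hlt]]
        exact hlt
      · rcases Relation.ReflTransGen.cases_head hreach with heq | ⟨b, hstep, hreach'⟩
        · exfalso
          subst heq
          simp only [Nat.sub_self, Nat.sub_zero] at hval
          exact hlt hval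
        · obtain ⟨_, a, hπ, rfl⟩ := hstep
          have ha : a ≠ e := by
            intro h
            subst h
            rcases Relation.ReflTransGen.cases_head hreach' with heq | ⟨c, hstep2, _⟩
            · apply hes'; rw [← heq]; simp
            · exact hstep2.1 (by simp)
          have hsa : e ∉ s ++ [a] := by
            simp only [List.mem_append, List.mem_singleton]
            rintro (h | h)
            · exact hs h
            · exact ha h.symm
          have hmono := reach_length_le hreach'
          simp only [List.length_append, List.length_singleton] at hmono hlen
          have hstrict : Vval e r π n (s ++ [a]) < Aval e r π rb n (s ++ [a]) := by
            apply ih _ hsa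
            refine ⟨s', hreach', hes', ?_, ?_⟩
            · simp only [List.length_append, List.length_singleton]; omega
            · have harith : n - (s'.length - (s ++ [a]).length)
                  = (n + 1) - (s'.length - s.length) := by
                simp only [List.length_append, List.length_singleton]; omega
              rwa [harith]
          rw [Vval, Aval]
          simp only [hs, if_false]
          rw [if_neg hlt]
          apply Finset.sum_lt_sum
          · intro a' _
            apply mul_le_mul_of_nonneg_left _ (hπ0 s a')
            by_cases ha' : a' = e
            · simp [ha']
            · simp only [ha', if_false]
              exact Vval_le_Aval e r π rb hπ0 _ _
          · refine ⟨a, Finset.mem_univ a, ?_⟩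
            simp only [ha, if_false]
            exact mul_lt_mul_of_pos_left hstrict hπ

/-- Dominance over no abstention (Proposition 4.2): `J(a(π)) ≥ J(π)` and
`J(a(π)) ≥ r⊥`, with strict improvement iff some reachable non-terminal
state has value below `r⊥`.  Here `J(π') = E_{x∼ρ}[V((x, ∅); π')]`. -/
theorem dominance_over_no_abstention [Fintype V] {X : Type*} [Fintype X]
    (e : V) (ρ : X → ℝ) (r : X → List V → ℝ)
    (π : X → List V → V → ℝ) (rb : ℝ) (T : ℕ)
    (hρ0 : ∀ x, 0 ≤ ρ x) (hρ1 : ∑ x, ρ x = 1)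
    (hπ0 : ∀ x s a, 0 ≤ π x s a) (hπ1 : ∀ x s, ∑ a : V, π x s a = 1)
    (hr : ∀ x y, r x y ∈ Set.Icc (0:ℝ) 1)
    (hrb0 : 0 < rb) (hrb1 : rb ≤ 1) (hT : 1 ≤ T) :
    (∑ x, ρ x * Vval e (r x) (π x) T []) ≤ (∑ x, ρ x * Aval e (r x) (π x) rb T []) ∧
    rb ≤ (∑ x, ρ x * Aval e (r x) (π x) rb T []) ∧
    ((∑ x, ρ x * Vval e (r x) (π x) T []) < (∑ x, ρ x * Aval e (r x) (π x) rb T []) ↔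
      ∃ x s, 0 < ρ x ∧ Reach e (π x) [] s ∧ e ∉ s ∧ s.length < T ∧
        Vval e (r x) (π x) (T - s.length) s < rb) := by
  obtain ⟨n, rfl⟩ : ∃ n, T = n + 1 := ⟨T - 1, by omega⟩
  have hle : ∀ x, ρ x * Vval e (r x) (π x) (n+1) []
      ≤ ρ x * Aval e (r x) (π x) rb (n+1) [] := fun x =>
    mul_le_mul_of_nonneg_left (Vval_le_Aval e (r x) (π x) rb (hπ0 x) _ _) (hρ0 x)
  refine ⟨Finset.sum_le_sum fun x _ => hle x, ?_, ?_, ?_⟩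
  · calc rb = ∑ x, ρ x * rb := by rw [← Finset.sum_mul, hρ1, one_mul]
      _ ≤ ∑ x, ρ x * Aval e (r x) (π x) rb (n+1) [] := by
        apply Finset.sum_le_sum
        intro x _
        exact mul_le_mul_of_nonneg_left
          (rb_le_Aval e (r x) (π x) rb (hπ0 x) List.not_mem_nil) (hρ0 x)
  · -- mp: strict sum inequality implies existence of bad state
    intro hlt
    by_contra hno
    push_neg at hno
    have heq : ∀ x, ρ x * Aval e (r x) (π x) rb (n+1) []
        = ρ x * Vval e (r x) (π x) (n+1) [] := by
      intro x
      rcases eq_or_lt_of_le (hρ0 x) with hρ | hρ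
      · rw [← hρ]; ring
      · congr 1
        apply Aval_eq_Vval_of_no_bad e (r x) (π x) rb (hπ0 x) _ _ List.not_mem_nil
        intro s' hreach hes' hlen
        have := hno x s' hρ hreach hes'
        simp only [List.length_nil, Nat.sub_zero] at hlen ⊢
        exact this (by omega)
    rw [Finset.sum_congr rfl (fun x _ => heq x)] at hlt
    exact lt_irrefl _ hlt
  · rintro ⟨x, s, hρ, hreach, hes, hlen, hval⟩
    apply Finset.sum_lt_sum (fun x _ => hle x)
    refine ⟨x, Finset.mem_univ x, ?_⟩
    apply mul_lt_mul_of_pos_left _ hρ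
    apply Vval_lt_Aval_of_bad e (r x) (π x) rb (hπ0 x) _ _ List.not_mem_nil
    exact ⟨s, hreach, hes, by simpa using hlen, by simpa using hval⟩
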